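/- If v_ℓ is a right singular vector of A with singular value σ_ℓ (so A^T A v_ℓ = σ_ℓ^2 v_ℓ), then for the RK step z_k = z_{k-1} - (A_{(j)}^T z_{k-1}/||A_{(j)}||^2) A_{(j)} with column j chosen with probability ||A_{(j)}||^2/||A||_F^2, one has E_{k-1}[⟨z_k - w, A v_ℓ⟩] = (1 - σ_ℓ^2/||A||_F^2) ⟨z_{k-1} - w, A v_ℓ⟩ for any vector w with A^T w = 0. -/

import Mathlib

open Matrix BigOperators Finset

noncomputable def frob2 {m n : ℕ} (A : Matrix (Fin m) (Fin n) ℝ) : ℝ :=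
  ∑ i, ∑ j, (A i j) ^ 2

noncomputable def colNorm2 {m n : ℕ} (A : Matrix (Fin m) (Fin n) ℝ) (j : Fin n) : ℝ :=
  ∑ i, (A i j) ^ 2

noncomputable def colStep {m n : ℕ} (A : Matrix (Fin m) (Fin n) ℝ) (j : Fin n)
    (z : Fin m → ℝ) : Fin m → ℝ :=
  z - ((Aᵀ j ⬝ᵥ z) / colNorm2 A j) • Aᵀ j

lemma frob2_eq_sum_col {m n : ℕ} (A : Matrix (Fin m) (Fin n) ℝ) :
    frob2 A = ∑ j, colNorm2 A j := by
  simp only [frob2, colNorm2]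
  rw [Finset.sum_comm]

lemma frob2_pos {m n : ℕ} (A : Matrix (Fin m) (Fin n) ℝ) (hA : A ≠ 0) :
    0 < frob2 A := by
  have hnn : 0 ≤ frob2 A :=
    Finset.sum_nonneg fun i _ => Finset.sum_nonneg fun j _ => sq_nonneg _
  rcases hnn.lt_or_eq with h | h
  · exact h
  · exfalso
    apply hA
    ext i j
    have h1 := (Finset.sum_eq_zero_iff_of_nonneg
      (fun i _ => Finset.sum_nonneg fun j _ => sq_nonneg (A i j))).mp h.symm i (Finset.mem_univ i)
    have h2 := (Finset.sum_eq_zero_iff_of_nonneg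
      (fun j _ => sq_nonneg (A i j))).mp h1 j (Finset.mem_univ j)
    simpa using pow_eq_zero_iff two_ne_zero |>.mp h2

theorem rek_colstep_singular_contraction {m n : ℕ}
    (A : Matrix (Fin m) (Fin n) ℝ) (hA : A ≠ 0)
    (σ : ℝ) (hσ : 0 ≤ σ) (v : Fin n → ℝ)
    (hv : Aᵀ *ᵥ (A *ᵥ v) = σ ^ 2 • v)
    (w : Fin m → ℝ) (hw : Aᵀ *ᵥ w = 0)
    (z : Fin m → ℝ) :
    ∑ j : Fin n, (colNorm2 A j / frob2 A) * ((colStep A j z - w) ⬝ᵥ (A *ᵥ v))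
      = (1 - σ ^ 2 / frob2 A) * ((z - w) ⬝ᵥ (A *ᵥ v)) := by
  set F := frob2 A with hF
  have hFpos : 0 < F := frob2_pos A hA
  have hFne : F ≠ 0 := ne_of_gt hFpos
  have hcol : ∀ j, Aᵀ j ⬝ᵥ (A *ᵥ v) = σ ^ 2 * v j := by
    intro j
    have := congrFun hv j
    simp [Matrix.mulVec] at this
    exact this
  set D := (z - w) ⬝ᵥ (A *ᵥ v) with hD
  have hterm : ∀ j, (colStep A j z - w) ⬝ᵥ (A *ᵥ v)
      = D - ((Aᵀ j ⬝ᵥ z) / colNorm2 A j) * (σ ^ 2 * v j) := by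
    intro j
    have : colStep A j z - w = (z - w) - ((Aᵀ j ⬝ᵥ z) / colNorm2 A j) • Aᵀ j := by
      simp [colStep]; abel
    rw [this, sub_dotProduct, smul_dotProduct, hcol, smul_eq_mul]
  have hzero : ∀ j, colNorm2 A j = 0 → Aᵀ j ⬝ᵥ z = 0 := by
    intro j hj
    have hcols : ∀ i, A i j = 0 := by
      intro i
      have := Finset.sum_eq_zero_iff_of_nonneg (fun i _ => sq_nonneg (A i j)) |>.mp hj i (Finset.mem_univ i)
      exact pow_eq_zero_iff (two_ne_zero) |>.mp this
    simp [dotProduct, Matrix.transpose_apply, hcols]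
  have hsplit : ∀ j, (colNorm2 A j / F) * ((colStep A j z - w) ⬝ᵥ (A *ᵥ v))
      = (colNorm2 A j / F) * D - (σ ^ 2 / F) * ((Aᵀ j ⬝ᵥ z) * v j) := by
    intro j
    rw [hterm]
    by_cases hc : colNorm2 A j = 0
    · rw [hc, hzero j hc]; ring
    · field_simp
  rw [Finset.sum_congr rfl (fun j _ => hsplit j), Finset.sum_sub_distrib,
    ← Finset.sum_mul, ← Finset.sum_div, ← frob2_eq_sum_col, ← hF, div_self hFne, one_mul]
  have hwz : ∑ j, (Aᵀ j ⬝ᵥ z) * v j = D := by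
    have h1 : ∑ j, (Aᵀ j ⬝ᵥ z) * v j = z ⬝ᵥ (A *ᵥ v) := by
      simp only [dotProduct, Matrix.mulVec, Matrix.transpose_apply, Finset.sum_mul,
        Finset.mul_sum]
      rw [Finset.sum_comm]
      apply Finset.sum_congr rfl; intro i _
      apply Finset.sum_congr rfl; intro j _
      ring
    have h2 : w ⬝ᵥ (A *ᵥ v) = 0 := by
      have : w ⬝ᵥ (A *ᵥ v) = (Aᵀ *ᵥ w) ⬝ᵥ v := by
        simp only [dotProduct, Matrix.mulVec, Matrix.transpose_apply, Finset.sum_mul,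
          Finset.mul_sum]
        rw [Finset.sum_comm]
        apply Finset.sum_congr rfl; intro i _
        apply Finset.sum_congr rfl; intro j _
        ring
      rw [this, hw]; simp
    rw [h1, hD, sub_dotProduct, h2, sub_zero]
  rw [← Finset.mul_sum, hwz]
  ring
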